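/- Let (Ω_{d−1}, ⟨·⟩) be a finite torus of integer points with discrete Laplacian Δ, and V : Ω_{d−1} → ℝ with 0 < |V| < 2, in dimension d = 2 (so Δ is the 1-dimensional discrete Laplacian). For Φ : Ω₁ → ℝ let w₊ = (−Δ+2)Φ/V − Φ, w₋ = (−Δ+2)Φ/V + Φ. Then 2⟨w₋w₊(4+V²)⟩ + ⟨V w₊ Δw₋⟩ − ⟨V w₋ Δw₊⟩ − (1/2)⟨(2−|V|)²(w₋² + w₊²)⟩ ≥ 0. -/
import Mathlib

theorem stmt_11 (n : ℕ) [NeZero n] (V Φ : ZMod n → ℝ)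
    (hV : ∀ y, 0 < |V y| ∧ |V y| < 2) :
    let lap : (ZMod n → ℝ) → ZMod n → ℝ := fun f x => f (x+1) + f (x-1) - 2 * f x
    let wp : ZMod n → ℝ := fun y => (-(lap Φ) y + 2 * Φ y) / V y - Φ y
    let wm : ZMod n → ℝ := fun y => (-(lap Φ) y + 2 * Φ y) / V y + Φ y
    let avg : (ZMod n → ℝ) → ℝ := fun h => (∑ y, h y) / (n : ℝ)
    2 * avg (fun y => wm y * wp y * (4 + V y ^ 2))
      + avg (fun y => V y * wp y * lap wm y)
      - avg (fun y => V y * wm y * lap wp y)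
      - (1/2) * avg (fun y => (2 - |V y|) ^ 2 * (wm y ^ 2 + wp y ^ 2)) ≥ 0 := by
  intro lap wp wm avg
  have hV0 : ∀ y, V y ≠ 0 := fun y => abs_ne_zero.mp (ne_of_gt (hV y).1)
  obtain ⟨u, hu⟩ : ∃ u : ZMod n → ℝ, ∀ y, u y = (-(lap Φ) y + 2 * Φ y) / V y :=
    ⟨_, fun _ => rfl⟩
  have hwp : ∀ y, wp y = u y - Φ y := fun y => by rw [hu]
  have hwm : ∀ y, wm y = u y + Φ y := fun y => by rw [hu]
  have ha : ∀ y, V y * u y = -(Φ (y+1) + Φ (y-1) - 2 * Φ y) + 2 * Φ y := by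
    intro y
    rw [hu]
    show V y * ((-(lap Φ) y + 2 * Φ y) / V y) = _
    rw [show lap Φ y = Φ (y+1) + Φ (y-1) - 2 * Φ y from rfl, mul_comm,
      div_mul_cancel₀ _ (hV0 y)]
  -- shift lemmas
  have hshift : ∀ f : ZMod n → ℝ, ∑ y, f (y + 1) = ∑ y, f y :=
    fun f => Fintype.sum_equiv (Equiv.addRight (1 : ZMod n)) _ _ fun y => rfl
  have hshift' : ∀ f : ZMod n → ℝ, ∑ y, f (y - 1) = ∑ y, f y :=
    fun f => Fintype.sum_equiv (Equiv.subRight (1 : ZMod n)) _ _ fun y => rfl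
  -- pointwise inequality : K ≤ G
  have hGK : ∀ y,
      (Φ (y+1) + Φ (y-1) - 2 * Φ y)^2 - 12 * Φ y * (Φ (y+1) + Φ (y-1) - 2 * Φ y)
        + 4 * u y^2 - 2 * u (y+1)^2 - 2 * u (y-1)^2
      ≤ 2 * (wm y * wp y * (4 + V y ^ 2)) + V y * wp y * lap wm y
        - V y * wm y * lap wp y
        - (1/2) * ((2 - |V y|) ^ 2 * (wm y ^ 2 + wp y ^ 2)) := by
    intro y
    have h1 : 0 < |V y| := (hV y).1
    have h2 : |V y| ≤ 2 := (hV y).2.le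
    rw [show lap wm y = wm (y+1) + wm (y-1) - 2 * wm y from rfl,
      show lap wp y = wp (y+1) + wp (y-1) - 2 * wp y from rfl]
    simp only [hwm, hwp]
    have hid : 2 * ((u y + Φ y) * (u y - Φ y) * (4 + V y ^ 2))
        + V y * (u y - Φ y) * ((u (y+1) + Φ (y+1)) + (u (y-1) + Φ (y-1)) - 2 * (u y + Φ y))
        - V y * (u y + Φ y) * ((u (y+1) - Φ (y+1)) + (u (y-1) - Φ (y-1)) - 2 * (u y - Φ y))
        - (1/2) * ((2 - |V y|) ^ 2 * ((u y + Φ y) ^ 2 + (u y - Φ y) ^ 2))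
        = ((Φ (y+1) + Φ (y-1) - 2 * Φ y)^2 - 12 * Φ y * (Φ (y+1) + Φ (y-1) - 2 * Φ y)
            + 4 * u y^2 - 2 * u (y+1)^2 - 2 * u (y-1)^2)
          + (2 * |V y| * (2 - |V y|) * (u y^2 + Φ y^2)
            + ((2 * Φ y^2 + 2 * u (y+1)^2 - 2 * V y * Φ y * u (y+1))
              + (2 * Φ y^2 + 2 * u (y-1)^2 - 2 * V y * Φ y * u (y-1))
              + (4 - |V y|^2) * Φ y^2)) := by
      linear_combination (3 * (V y * u y) + 12 * Φ y - Φ (y+1) - Φ (y-1)) * ha y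
        + (u y ^ 2 + 2 * Φ y ^ 2) * sq_abs (V y)
    have s1 : 0 ≤ 2 * |V y| * (2 - |V y|) * (u y^2 + Φ y^2) := by
      apply mul_nonneg (mul_nonneg (by positivity) (by linarith)) (by positivity)
    have hcross : ∀ w : ℝ, 0 ≤ 2 * Φ y^2 + 2 * w^2 - 2 * V y * Φ y * w := by
      intro w
      have h3 : V y * (Φ y * w) ≤ |V y * (Φ y * w)| := le_abs_self _
      have h4 : |V y * (Φ y * w)| = |V y| * (|Φ y| * |w|) := by rw [abs_mul, abs_mul]
      nlinarith [sq_nonneg (|Φ y| - |w|), sq_abs (Φ y), sq_abs w,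
        mul_nonneg (abs_nonneg (Φ y)) (abs_nonneg w)]
    have s2 := hcross (u (y+1))
    have s3 := hcross (u (y-1))
    have s4 : 0 ≤ (4 - |V y|^2) * Φ y^2 :=
      mul_nonneg (by nlinarith) (sq_nonneg _)
    linarith [hid, s1, s2, s3, s4]
  -- sum of K equals a sum of squares
  have hE : ∑ y, ((12 * (Φ (y+1) * Φ y) - 12 * (Φ y * Φ (y-1)))
      + (12 * Φ y^2 - 12 * Φ (y+1)^2)
      + (4 * u y^2 - 2 * u (y+1)^2 - 2 * u (y-1)^2)) = 0 := by
    have t1 : ∑ y, u (y+1)^2 = ∑ y, u y^2 := hshift (fun z => u z^2)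
    have t2 : ∑ y, u (y-1)^2 = ∑ y, u y^2 := hshift' (fun z => u z^2)
    have t3 : ∑ y, Φ (y+1) * Φ y = ∑ y, Φ y * Φ (y-1) := by
      simpa using hshift (fun z => Φ z * Φ (z-1))
    have t4 : ∑ y, Φ (y+1)^2 = ∑ y, Φ y^2 := hshift (fun z => Φ z^2)
    simp only [Finset.sum_add_distrib, Finset.sum_sub_distrib, ← Finset.mul_sum]
    rw [t1, t2, t3, t4]
    ring
  have hsum0 : ∑ y, ((Φ (y+1) + Φ (y-1) - 2 * Φ y)^2
        - 12 * Φ y * (Φ (y+1) + Φ (y-1) - 2 * Φ y)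
        + 4 * u y^2 - 2 * u (y+1)^2 - 2 * u (y-1)^2)
      = ∑ y, ((Φ (y+1) + Φ (y-1) - 2 * Φ y)^2 + 12 * (Φ (y+1) - Φ y)^2) := by
    calc ∑ y, ((Φ (y+1) + Φ (y-1) - 2 * Φ y)^2
          - 12 * Φ y * (Φ (y+1) + Φ (y-1) - 2 * Φ y)
          + 4 * u y^2 - 2 * u (y+1)^2 - 2 * u (y-1)^2)
        = ∑ y, (((Φ (y+1) + Φ (y-1) - 2 * Φ y)^2 + 12 * (Φ (y+1) - Φ y)^2)
          + ((12 * (Φ (y+1) * Φ y) - 12 * (Φ y * Φ (y-1)))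
            + (12 * Φ y^2 - 12 * Φ (y+1)^2)
            + (4 * u y^2 - 2 * u (y+1)^2 - 2 * u (y-1)^2))) :=
          Finset.sum_congr rfl (fun y _ => by ring)
      _ = _ := by rw [Finset.sum_add_distrib, hE, add_zero]
  have key : (0:ℝ) ≤ ∑ y, (2 * (wm y * wp y * (4 + V y ^ 2)) + V y * wp y * lap wm y
      - V y * wm y * lap wp y
      - (1/2) * ((2 - |V y|) ^ 2 * (wm y ^ 2 + wp y ^ 2))) := by
    refine le_trans ?_ (Finset.sum_le_sum (fun y _ => hGK y))
    rw [hsum0]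
    exact Finset.sum_nonneg fun y _ => by positivity
  have hsplit : ∑ y, (2 * (wm y * wp y * (4 + V y ^ 2)) + V y * wp y * lap wm y
      - V y * wm y * lap wp y
      - (1/2) * ((2 - |V y|) ^ 2 * (wm y ^ 2 + wp y ^ 2)))
      = 2 * (∑ y, wm y * wp y * (4 + V y ^ 2)) + (∑ y, V y * wp y * lap wm y)
        - (∑ y, V y * wm y * lap wp y)
        - (1/2) * (∑ y, (2 - |V y|) ^ 2 * (wm y ^ 2 + wp y ^ 2)) := by
    simp only [Finset.sum_add_distrib, Finset.sum_sub_distrib, ← Finset.mul_sum]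
  have hgoal : 2 * ((∑ y, wm y * wp y * (4 + V y ^ 2)) / (n:ℝ))
      + (∑ y, V y * wp y * lap wm y) / (n:ℝ)
      - (∑ y, V y * wm y * lap wp y) / (n:ℝ)
      - (1/2) * ((∑ y, (2 - |V y|) ^ 2 * (wm y ^ 2 + wp y ^ 2)) / (n:ℝ))
      = (∑ y, (2 * (wm y * wp y * (4 + V y ^ 2)) + V y * wp y * lap wm y
          - V y * wm y * lap wp y
          - (1/2) * ((2 - |V y|) ^ 2 * (wm y ^ 2 + wp y ^ 2)))) / (n:ℝ) := by
    rw [hsplit]; ring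
  show 2 * ((∑ y, wm y * wp y * (4 + V y ^ 2)) / (n:ℝ))
      + (∑ y, V y * wp y * lap wm y) / (n:ℝ)
      - (∑ y, V y * wm y * lap wp y) / (n:ℝ)
      - (1/2) * ((∑ y, (2 - |V y|) ^ 2 * (wm y ^ 2 + wp y ^ 2)) / (n:ℝ)) ≥ 0
  rw [ge_iff_le, hgoal]
  exact div_nonneg key (Nat.cast_nonneg n)
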